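/- Assume additionally that ι (m−1) < n + m. Then the hidden features are expressed purely in terms of the observable features (Eq. (8) of the paper): (a) for every i with 1 ≤ i < ι 0, φ* i = φ i * ∏_{j : Fin m} (φ (ι j) * φ (ι j + 1)); (b) for every k with k + 1 ≤ m − 1 and every i with ι k < i < ι (k+1), φ* (i − (k+1)) = φ i * ∏_{j : Fin m, j ≥ k+1} (φ (ι j) * φ (ι j + 1)); (c) for every i with ι (m−1) < i ≤ n + m, φ* (i − m) = φ i. -/

import Mathlib

lemma card_filter_val_lt (m v : ℕ) (h : v ≤ m) :
    (Finset.univ.filter (fun t : Fin m => (t : ℕ) < v)).card = v := by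
  classical
  apply Finset.card_eq_of_bijective (fun k hk => (⟨k, lt_of_lt_of_le hk h⟩ : Fin m))
  · intro a ha
    simp only [Finset.mem_filter] at ha
    exact ⟨a, ha.2, rfl⟩
  · intro k hk
    simp [hk]
  · intro k₁ k₂ h1 h2 he
    simpa using congrArg Fin.val he

set_option maxHeartbeats 1600000 in
/-- Eq. (8) of the paper: assuming `ι (m-1) < n + m`, the hidden
features are expressed purely in terms of the observable features. -/
theorem stmt5 (n m : ℕ) (hn : 1 ≤ n) (hm : 1 ≤ m)
    (ι : Fin m → ℕ) (hmono : StrictMono ι)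
    (hfirst : 1 ≤ ι ⟨0, hm⟩) (hlast : ι ⟨m - 1, by omega⟩ < n + m)
    (b : ℕ → ℤ) (hb : ∀ k, b k = 0 ∨ b k = 1)
    (c : ℕ → ℤ)
    (hc1 : ∀ i, 1 ≤ i → i < ι ⟨0, hm⟩ → c i = b i)
    (hc2 : ∀ k (hk : k + 1 ≤ m - 1), ∀ i,
      ι ⟨k, by omega⟩ < i → i < ι ⟨k + 1, by omega⟩ → c (i - (k + 1)) = b i)
    (hc3 : ∀ i, ι ⟨m - 1, by omega⟩ < i → i ≤ n + m → c (i - m) = b i)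
    (φs : ℕ → ℤ) (hφs : ∀ i, φs i = ∏ k ∈ Finset.Icc i n, (2 * c k - 1))
    (φ : ℕ → ℤ) (hφ : ∀ i, φ i = ∏ k ∈ Finset.Icc i (n + m), (2 * b k - 1)) :
    (∀ i, 1 ≤ i → i < ι ⟨0, hm⟩ →
      φs i = φ i * ∏ j : Fin m, (φ (ι j) * φ (ι j + 1))) ∧
    (∀ k (hk : k + 1 ≤ m - 1), ∀ i,
      ι ⟨k, by omega⟩ < i → i < ι ⟨k + 1, by omega⟩ →
      φs (i - (k + 1)) = φ i *
        ∏ j ∈ Finset.univ.filter (fun j : Fin m => k + 1 ≤ (j : ℕ)),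
          (φ (ι j) * φ (ι j + 1))) ∧
    (∀ i, ι ⟨m - 1, by omega⟩ < i → i ≤ n + m → φs (i - m) = φ i) := by
  classical
  -- basic monotonicity facts
  have hmle : ∀ s t : Fin m, (s : ℕ) ≤ (t : ℕ) → ι s ≤ ι t := by
    intro s t h
    exact hmono.monotone h
  have hmlt : ∀ s t : Fin m, (s : ℕ) < (t : ℕ) ↔ ι s < ι t := by
    intro s t
    constructor
    · intro h; exact hmono h
    · intro h; exact hmono.lt_iff_lt.mp h
  have hι1 : ∀ t : Fin m, 1 ≤ ι t := fun t =>
    le_trans hfirst (hmle ⟨0, hm⟩ t (Nat.zero_le _))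
  have hιtop : ∀ t : Fin m, ι t < n + m := fun t =>
    lt_of_le_of_lt (hmle t ⟨m - 1, by omega⟩ (Nat.le_pred_of_lt t.isLt)) hlast
  -- sign facts
  have hpm : ∀ s, (2 * b s - 1) * (2 * b s - 1) = 1 := by
    intro s; rcases hb s with h | h <;> rw [h] <;> ring
  have hφsq : ∀ s, φ s * φ s = 1 := by
    intro s
    rw [hφ s, ← Finset.prod_mul_distrib]
    exact Finset.prod_eq_one fun k _ => hpm k
  have hIcc : ∀ s N : ℕ, s ≤ N → Finset.Icc s N = insert s (Finset.Icc (s + 1) N) := by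
    intro s N h; ext x; simp only [Finset.mem_Icc, Finset.mem_insert]; omega
  have hφstep : ∀ s, s ≤ n + m → φ s = (2 * b s - 1) * φ (s + 1) := by
    intro s hs
    rw [hφ s, hφ (s + 1), hIcc s (n + m) hs, Finset.prod_insert (by simp)]
  have hφsstep : ∀ t, t ≤ n → φs t = (2 * c t - 1) * φs (t + 1) := by
    intro t ht
    rw [hφs t, hφs (t + 1), hIcc t n ht, Finset.prod_insert (by simp)]
  have hghost : ∀ j : Fin m, φ (ι j) * φ (ι j + 1) = 2 * b (ι j) - 1 := by
    intro j
    rw [hφstep (ι j) (hιtop j).le, mul_assoc, hφsq (ι j + 1), mul_one]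
  -- key induction
  have key : ∀ d i, 1 ≤ i → i + d = n + m + 1 →
      φs (i - (Finset.univ.filter (fun t : Fin m => ι t < i)).card) =
        φ i * ∏ t ∈ Finset.univ.filter (fun t : Fin m => i ≤ ι t), (2 * b (ι t) - 1) := by
    intro d
    induction d with
    | zero =>
      intro i h1 h2
      have hi : i = n + m + 1 := by omega
      subst hi
      have e1 : (Finset.univ.filter (fun t : Fin m => ι t < n + m + 1)) = Finset.univ :=
        Finset.filter_true_of_mem fun t _ => by have := hιtop t; omega
      have e2 : (Finset.univ.filter (fun t : Fin m => n + m + 1 ≤ ι t)) = ∅ :=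
        Finset.filter_false_of_mem fun t _ => by have := hιtop t; omega
      rw [e1, e2, Finset.card_univ, Fintype.card_fin, Finset.prod_empty, mul_one,
        hφs, hφ, show n + m + 1 - m = n + 1 from by omega,
        Finset.Icc_eq_empty (by omega), Finset.Icc_eq_empty (by omega)]
      simp
    | succ d ih =>
      intro i h1 h2
      have hile : i ≤ n + m := by omega
      have hQ := ih (i + 1) (by omega) (by omega)
      by_cases hgh : ∃ j : Fin m, ι j = i
      · obtain ⟨j, hj⟩ := hgh
        have f1 : (Finset.univ.filter (fun t : Fin m => ι t < i)) =
            (Finset.univ.filter (fun t : Fin m => (t : ℕ) < (j : ℕ))) :=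
          Finset.filter_congr fun t _ => by rw [← hj]; exact (hmlt t j).symm
        have f2 : (Finset.univ.filter (fun t : Fin m => ι t < i + 1)) =
            (Finset.univ.filter (fun t : Fin m => (t : ℕ) < (j : ℕ) + 1)) := by
          refine Finset.filter_congr fun t _ => ?_
          constructor
          · intro h
            have hle : ι t ≤ ι j := by omega
            have := (hmlt j t).mpr
            by_contra hc
            have : ι j < ι t := (hmlt j t).mp (by omega)
            omega
          · intro h
            have : ι t ≤ ι j := hmle t j (by omega)
            omega
        have f3 : (Finset.univ.filter (fun t : Fin m => i ≤ ι t)) =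
            insert j (Finset.univ.filter (fun t : Fin m => i + 1 ≤ ι t)) := by
          ext t
          simp only [Finset.mem_filter, Finset.mem_insert, Finset.mem_univ, true_and]
          constructor
          · intro h
            by_cases ht : ι t = i
            · left; exact hmono.injective (by rw [ht, hj])
            · right; omega
          · rintro (rfl | h)
            · omega
            · omega
        have hnm : j ∉ (Finset.univ.filter (fun t : Fin m => i + 1 ≤ ι t)) := by
          simp [hj]
        rw [f1, card_filter_val_lt m j j.isLt.le, f3, Finset.prod_insert hnm, hj,
          hφstep i hile]
        rw [f2, card_filter_val_lt m (j + 1) j.isLt,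
          show i + 1 - ((j : ℕ) + 1) = i - j from by omega] at hQ
        rw [hQ]
        linear_combination (-(φ (i + 1)) *
          ∏ t ∈ Finset.univ.filter (fun t : Fin m => i + 1 ≤ ι t), (2 * b (ι t) - 1)) * hpm i
      · push_neg at hgh
        have f1 : (Finset.univ.filter (fun t : Fin m => ι t < i + 1)) =
            (Finset.univ.filter (fun t : Fin m => ι t < i)) :=
          Finset.filter_congr fun t _ => by have := hgh t; omega
        have f2 : (Finset.univ.filter (fun t : Fin m => i + 1 ≤ ι t)) =
            (Finset.univ.filter (fun t : Fin m => i ≤ ι t)) :=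
          Finset.filter_congr fun t _ => by have := hgh t; omega
        have hlt : (Finset.univ.filter (fun t : Fin m => ι t < i)).card ≤ i - 1 := by
          have := Finset.card_le_card_of_injOn (s := Finset.univ.filter (fun t : Fin m => ι t < i))
            (t := Finset.Icc 1 (i - 1)) ι
            (fun t ht => by
              simp only [Finset.mem_coe, Finset.mem_filter, Finset.mem_univ, true_and] at ht
              have := hι1 t
              exact Finset.mem_Icc.mpr ⟨this, by omega⟩)
            (hmono.injective.injOn)
          simpa [Nat.card_Icc] using this
        have hub : (Finset.univ.filter (fun t : Fin m => i ≤ ι t)).card ≤ n + m - i := by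
          have := Finset.card_le_card_of_injOn (s := Finset.univ.filter (fun t : Fin m => i ≤ ι t))
            (t := Finset.Icc i (n + m - 1)) ι
            (fun t ht => by
              simp only [Finset.mem_coe, Finset.mem_filter, Finset.mem_univ, true_and] at ht
              have := hιtop t
              exact Finset.mem_Icc.mpr ⟨ht, by omega⟩)
            (hmono.injective.injOn)
          rw [Nat.card_Icc] at this
          omega
        have hsum : (Finset.univ.filter (fun t : Fin m => ι t < i)).card +
            (Finset.univ.filter (fun t : Fin m => i ≤ ι t)).card = m := by
          have h := Finset.card_filter_add_card_filter_not
            (s := (Finset.univ : Finset (Fin m))) (p := fun t : Fin m => ι t < i)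
          have e : (Finset.univ.filter (fun t : Fin m => ¬ ι t < i)) =
              (Finset.univ.filter (fun t : Fin m => i ≤ ι t)) :=
            Finset.filter_congr fun t _ => by omega
          rw [e] at h
          simpa using h
        have hgcub : i - (Finset.univ.filter (fun t : Fin m => ι t < i)).card ≤ n := by omega
        have hcb : c (i - (Finset.univ.filter (fun t : Fin m => ι t < i)).card) = b i := by
          by_cases hA : i < ι ⟨0, hm⟩
          · have e : (Finset.univ.filter (fun t : Fin m => ι t < i)) = ∅ :=
              Finset.filter_false_of_mem fun t _ => by
                have := hmle ⟨0, hm⟩ t (Nat.zero_le _); omega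
            rw [e, Finset.card_empty, Nat.sub_zero]
            exact hc1 i h1 hA
          · by_cases hB : ι ⟨m - 1, by omega⟩ < i
            · have e : (Finset.univ.filter (fun t : Fin m => ι t < i)) = Finset.univ :=
                Finset.filter_true_of_mem fun t _ => by
                  have := hmle t ⟨m - 1, by omega⟩ (Nat.le_pred_of_lt t.isLt); omega
              rw [e, Finset.card_univ, Fintype.card_fin]
              exact hc3 i hB hile
            · have h0i : ι ⟨0, hm⟩ < i := lt_of_le_of_ne (not_lt.mp hA) (hgh _)
              have hmi : i ≤ ι ⟨m - 1, by omega⟩ := not_lt.mp hB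
              have hSne : (Finset.univ.filter (fun t : Fin m => ι t < i)).Nonempty :=
                ⟨⟨0, hm⟩, by simp only [Finset.mem_filter, Finset.mem_univ, true_and]; exact h0i⟩
              obtain ⟨kk, hkkS, hmax⟩ := Finset.exists_max_image
                (Finset.univ.filter (fun t : Fin m => ι t < i)) (fun t => (t : ℕ)) hSne
              have hkki : ι kk < i := (Finset.mem_filter.mp hkkS).2
              have hkm : (kk : ℕ) + 1 ≤ m - 1 := by
                have h' : ι kk < ι ⟨m - 1, by omega⟩ := by omega
                have h'' : (kk : ℕ) < m - 1 := (hmlt kk ⟨m - 1, by omega⟩).mpr h'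
                omega
              have hnext : i < ι ⟨(kk : ℕ) + 1, by omega⟩ := by
                have hne := hgh ⟨(kk : ℕ) + 1, by omega⟩
                by_contra hc
                have hmem : (⟨(kk : ℕ) + 1, by omega⟩ : Fin m) ∈
                    Finset.univ.filter (fun t : Fin m => ι t < i) := by
                  simp only [Finset.mem_filter, Finset.mem_univ, true_and]
                  omega
                have h2 : (kk : ℕ) + 1 ≤ (kk : ℕ) := hmax _ hmem
                omega
              have hcard : (Finset.univ.filter (fun t : Fin m => ι t < i)).card
                  = (kk : ℕ) + 1 := by
                have e : (Finset.univ.filter (fun t : Fin m => ι t < i)) =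
                    Finset.univ.filter (fun t : Fin m => (t : ℕ) < (kk : ℕ) + 1) := by
                  refine Finset.filter_congr fun t _ => ?_
                  constructor
                  · intro h
                    have h2 : (t : ℕ) ≤ (kk : ℕ) :=
                      hmax t (Finset.mem_filter.mpr ⟨Finset.mem_univ t, h⟩)
                    omega
                  · intro h
                    have := hmle t kk (by omega)
                    omega
                rw [e, card_filter_val_lt m ((kk : ℕ) + 1) kk.isLt]
              rw [hcard]
              exact hc2 (kk : ℕ) hkm i hkki hnext
        rw [hφsstep _ hgcub, hcb, hφstep i hile]
        rw [f1, f2] at hQ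
        rw [show i - (Finset.univ.filter (fun t : Fin m => ι t < i)).card + 1 =
          i + 1 - (Finset.univ.filter (fun t : Fin m => ι t < i)).card from by omega, hQ]
        ring
  refine ⟨?_, ?_, ?_⟩
  · intro i h1 h2
    have e1 : (Finset.univ.filter (fun t : Fin m => ι t < i)) = ∅ :=
      Finset.filter_false_of_mem fun t _ => by
        have := hmle ⟨0, hm⟩ t (Nat.zero_le _); omega
    have e2 : (Finset.univ.filter (fun t : Fin m => i ≤ ι t)) = Finset.univ :=
      Finset.filter_true_of_mem fun t _ => by
        have := hmle ⟨0, hm⟩ t (Nat.zero_le _); omega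
    have hk := key (n + m + 1 - i) i h1 (by have := hιtop ⟨0, hm⟩; omega)
    rw [e1, e2, Finset.card_empty, Nat.sub_zero] at hk
    rw [hk]
    congr 1
    exact (Finset.prod_congr rfl fun t _ => hghost t).symm
  · intro k hk i h1 h2
    have hkm : k < m := by omega
    have hk1m : k + 1 < m := by omega
    have hkub : ι ⟨k + 1, by omega⟩ ≤ ι ⟨m - 1, by omega⟩ :=
      hmle _ _ (show k + 1 ≤ m - 1 from hk)
    have e1 : (Finset.univ.filter (fun t : Fin m => ι t < i)) =
        (Finset.univ.filter (fun t : Fin m => (t : ℕ) < k + 1)) := by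
      refine Finset.filter_congr fun t _ => ?_
      constructor
      · intro h
        by_contra hc
        have := hmle ⟨k + 1, by omega⟩ t (show k + 1 ≤ (t : ℕ) from by omega)
        omega
      · intro h
        have := hmle t ⟨k, by omega⟩ (show (t : ℕ) ≤ k from by omega)
        omega
    have e2 : (Finset.univ.filter (fun t : Fin m => i ≤ ι t)) =
        (Finset.univ.filter (fun t : Fin m => k + 1 ≤ (t : ℕ))) := by
      refine Finset.filter_congr fun t _ => ?_
      constructor
      · intro h
        by_contra hc
        have := hmle t ⟨k, by omega⟩ (show (t : ℕ) ≤ k from by omega)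
        omega
      · intro h
        have := hmle ⟨k + 1, by omega⟩ t (show k + 1 ≤ (t : ℕ) from by omega)
        omega
    have hkey := key (n + m + 1 - i) i (by omega) (by have := hιtop ⟨m - 1, by omega⟩; omega)
    rw [e1, e2, card_filter_val_lt m (k + 1) (by omega)] at hkey
    rw [hkey]
    congr 1
    exact (Finset.prod_congr rfl fun t _ => hghost t).symm
  · intro i h1 h2
    have e1 : (Finset.univ.filter (fun t : Fin m => ι t < i)) = Finset.univ :=
      Finset.filter_true_of_mem fun t _ => by
        have := hmle t ⟨m - 1, by omega⟩ (Nat.le_pred_of_lt t.isLt); omega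
    have e2 : (Finset.univ.filter (fun t : Fin m => i ≤ ι t)) = ∅ :=
      Finset.filter_false_of_mem fun t _ => by
        have := hmle t ⟨m - 1, by omega⟩ (Nat.le_pred_of_lt t.isLt); omega
    have hkey := key (n + m + 1 - i) i (by omega) (by omega)
    rw [e1, e2, Finset.card_univ, Fintype.card_fin, Finset.prod_empty, mul_one] at hkey
    exact hkey
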